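/- In the Q-MAC setup, for any decoder g : ((ZMod 2)²)ⁿ → C₁ × C₂, if ε = P[g(Y) ≠ (X⁽¹⁾, X⁽²⁾)], then (1 − ε) · (log |C₁| + log |C₂|) ≤ n · (2·log 2 − H_P) + log 2, where H_P is the Shannon entropy of the noise distribution P. (This is the finite-blocklength form of the necessary sum-rate condition R₁ + R₂ ≤ I[(X₀⁽¹⁾, X₀⁽²⁾); Y₀].) -/

import Mathlib

open MeasureTheory

/-- Shannon entropy (in nats) of a random variable `X` taking values in a finite type,
`H[X] = ∑ s, (-P[X = s]) * log P[X = s]`. -/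
noncomputable def entropy {Ω S : Type*} [MeasurableSpace Ω] [Fintype S]
    (μ : Measure Ω) (X : Ω → S) : ℝ :=
  ∑ s : S, Real.negMulLog (μ (X ⁻¹' {s})).toReal

/-- Conditional Shannon entropy (in nats), `H[X | Z] = H[(X, Z)] - H[Z]` (chain rule). -/
noncomputable def condEntropy {Ω S T : Type*} [MeasurableSpace Ω] [Fintype S] [Fintype T]
    (μ : Measure Ω) (X : Ω → S) (Z : Ω → T) : ℝ :=
  entropy μ (fun ω => (X ω, Z ω)) - entropy μ Z

/-- Shannon entropy (in nats) of a probability distribution on a finite type. -/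
noncomputable def distEntropy {S : Type*} [Fintype S] (P : PMF S) : ℝ :=
  ∑ s : S, Real.negMulLog (P s).toReal


section QMacAux
open Real Finset

lemma lemA {ι : Type*} (t : Finset ι) (w : ι → ℝ) (hw : ∀ i ∈ t, 0 ≤ w i) :
    ∑ i ∈ t, negMulLog (w i) ≤ negMulLog (∑ i ∈ t, w i) + (∑ i ∈ t, w i) * Real.log t.card := by
  rcases t.eq_empty_or_nonempty with rfl | ht
  · simp
  have hk : (0:ℝ) < t.card := by exact_mod_cast Finset.card_pos.2 ht
  have hjen := concaveOn_negMulLog.le_map_sum (t := t) (w := fun _ => (t.card : ℝ)⁻¹)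
    (p := w) (fun i _ => by positivity)
    (by rw [Finset.sum_const, nsmul_eq_mul, mul_inv_cancel₀ hk.ne']) (fun i hi => Set.mem_Ici.2 (hw i hi))
  simp only [smul_eq_mul, ← Finset.mul_sum] at hjen
  have key : ∑ i ∈ t, negMulLog (w i) ≤ t.card * negMulLog ((t.card:ℝ)⁻¹ * ∑ i ∈ t, w i) := by
    have h2 := mul_le_mul_of_nonneg_left hjen hk.le
    rwa [← mul_assoc, mul_inv_cancel₀ hk.ne', one_mul] at h2
  refine key.trans_eq ?_
  rw [negMulLog_mul]
  simp only [negMulLog, Real.log_inv]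
  field_simp
  ring

lemma lemB {a e : ℝ} (ha : 0 ≤ a) (he : 0 ≤ e) :
    negMulLog a + negMulLog e ≤ negMulLog (a + e) + (a + e) * Real.log 2 := by
  rcases eq_or_lt_of_le (by positivity : (0:ℝ) ≤ a + e) with h0 | h0
  · have ha0 : a = 0 := by linarith
    have he0 : e = 0 := by linarith
    simp [ha0, he0]
  set W := a + e with hW
  have hx : a = W * (a / W) := by field_simp
  have hy : e = W * (e / W) := by field_simp
  have hxy : e / W = 1 - a / W := by field_simp; ring
  have hb : negMulLog (a/W) + negMulLog (1 - a/W) ≤ Real.log 2 := by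
    rw [← binEntropy_eq_negMulLog_add_negMulLog_one_sub]; exact binEntropy_le_log_two
  calc negMulLog a + negMulLog e
      = negMulLog (W * (a/W)) + negMulLog (W * (e/W)) := by rw [← hx, ← hy]
    _ = (a/W + e/W) * negMulLog W + W * (negMulLog (a/W) + negMulLog (e/W)) := by
        rw [negMulLog_mul, negMulLog_mul]; ring
    _ = negMulLog W + W * (negMulLog (a/W) + negMulLog (1 - a/W)) := by
        rw [hxy]; have : a/W + (1 - a/W) = 1 := by ring
        rw [this, one_mul]
    _ ≤ negMulLog W + W * Real.log 2 := by
        have := mul_le_mul_of_nonneg_left hb h0.le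
        linarith

lemma lemC {G : Type*} [Fintype G] [DecidableEq G] (w : G → ℝ) (hw : ∀ g, 0 ≤ w g) (a : G) :
    ∑ g, negMulLog (w g) ≤ negMulLog (∑ g, w g) + (∑ g, w g) * Real.log 2
      + (∑ g ∈ Finset.univ.erase a, w g) * Real.log (Fintype.card G) := by
  set e := ∑ g ∈ Finset.univ.erase a, w g with he
  have he0 : 0 ≤ e := Finset.sum_nonneg fun i _ => hw i
  have hsplit : ∑ g, w g = w a + e := by
    rw [he, ← Finset.add_sum_erase _ _ (Finset.mem_univ a)]
  have h1 : ∑ g ∈ Finset.univ.erase a, negMulLog (w g)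
      ≤ negMulLog e + e * Real.log ((Finset.univ.erase a).card) :=
    lemA _ _ fun i _ => hw i
  have hlog : Real.log ((Finset.univ.erase a).card) ≤ Real.log (Fintype.card G) := by
    rcases Nat.eq_zero_or_pos (Finset.univ.erase a).card with h | h
    · rw [h]; simpa using Real.log_natCast_nonneg (Fintype.card G)
    · exact Real.log_le_log (by exact_mod_cast h)
        (by exact_mod_cast (Finset.card_le_univ _))
  have h2 : negMulLog (w a) + negMulLog e ≤ negMulLog (w a + e) + (w a + e) * Real.log 2 :=
    lemB (hw a) he0
  calc ∑ g, negMulLog (w g) = negMulLog (w a) + ∑ g ∈ Finset.univ.erase a, negMulLog (w g) := by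
        rw [← Finset.add_sum_erase _ _ (Finset.mem_univ a)]
    _ ≤ negMulLog (w a) + (negMulLog e + e * Real.log ((Finset.univ.erase a).card)) := by
        linarith
    _ ≤ negMulLog (w a + e) + (w a + e) * Real.log 2 + e * Real.log (Fintype.card G) := by
        nlinarith [mul_le_mul_of_nonneg_left hlog he0]
    _ = negMulLog (∑ g, w g) + (∑ g, w g) * Real.log 2 + e * Real.log (Fintype.card G) := by
        rw [hsplit]

lemma lemD {α β : Type*} [Fintype α] [Fintype β] (a : α → ℝ) (b : β → ℝ) :
    ∑ x : α × β, negMulLog (a x.1 * b x.2)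
      = (∑ y, b y) * (∑ x, negMulLog (a x)) + (∑ x, a x) * (∑ y, negMulLog (b y)) := by
  rw [Fintype.sum_prod_type]
  simp only [negMulLog_mul, Finset.sum_add_distrib, ← Finset.mul_sum, ← Finset.sum_mul]

lemma lemE0 {S : Type*} [Fintype S] (p : S → ℝ) (h1 : ∑ s, p s = 1) (n : ℕ) :
    ∑ d : Fin n → S, ∏ i, p (d i) = 1 := by
  rw [← Fintype.piFinset_univ, ← Finset.prod_univ_sum]
  simp [h1]

lemma lemE {S : Type*} [Fintype S] (p : S → ℝ) (h1 : ∑ s, p s = 1) (n : ℕ) :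
    ∑ d : Fin n → S, negMulLog (∏ i, p (d i)) = n * ∑ s, negMulLog (p s) := by
  induction n with
  | zero => simp
  | succ n ih =>
    have key : ∑ x : S × (Fin n → S), negMulLog (p x.1 * ∏ i, p (x.2 i))
        = ∑ d : Fin (n+1) → S, negMulLog (∏ i, p (d i)) := by
      apply Fintype.sum_equiv (Fin.consEquiv (fun _ => S))
      intro x
      congr 1
      rw [Fin.prod_univ_succ]
      simp [Fin.consEquiv]
    rw [← key]
    refine (lemD p (fun t : Fin n → S => ∏ i, p (t i))).trans ?_
    rw [lemE0 p h1 n, ih, h1]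
    push_cast
    ring

lemma fano_pure {G D : Type*} [Fintype G] [Fintype D] [DecidableEq G] [Nonempty G]
    (q : D → ℝ) (hq0 : ∀ d, 0 ≤ q d) (hq1 : ∑ d, q d = 1)
    (yf : G → D ≃ D) (dec : D → G) :
    (1 - ∑ x : G × D, if dec (yf x.1 x.2) = x.1 then 0 else (Fintype.card G : ℝ)⁻¹ * q x.2)
       * Real.log (Fintype.card G)
    ≤ Real.log (Fintype.card D) - (∑ d, negMulLog (q d)) + Real.log 2 := by
  set N : ℝ := (Fintype.card G : ℝ) with hNdef
  have hN : 0 < N := by rw [hNdef]; exact_mod_cast Fintype.card_pos (α := G)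
  set r : G → D → ℝ := fun g y => N⁻¹ * q ((yf g).symm y) with hrdef
  have hr0 : ∀ g y, 0 ≤ r g y := fun g y => by
    have := hq0 ((yf g).symm y); positivity
  set m : D → ℝ := fun y => ∑ g, r g y with hmdef
  have hm0 : ∀ y, 0 ≤ m y := fun y => Finset.sum_nonneg fun g _ => hr0 g y
  have hrow : ∀ g, ∑ y, r g y = N⁻¹ := by
    intro g
    rw [hrdef]
    simp only
    rw [← Finset.mul_sum, Equiv.sum_comp (yf g).symm q, hq1, mul_one]
  have hm1 : ∑ y, m y = 1 := by
    rw [hmdef]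
    rw [Finset.sum_comm]
    simp only [hrow]
    rw [Finset.sum_const, Finset.card_univ, nsmul_eq_mul, ← hNdef]
    exact mul_inv_cancel₀ hN.ne'
  have hNlog : N * negMulLog N⁻¹ = Real.log N := by
    simp only [negMulLog, Real.log_inv]
    field_simp
  -- joint entropy
  have Hj : ∑ g : G, ∑ y : D, negMulLog (r g y)
      = Real.log N + ∑ d, negMulLog (q d) := by
    have hper : ∀ g : G, ∑ y : D, negMulLog (r g y) = ∑ d, negMulLog (N⁻¹ * q d) := by
      intro g
      exact Equiv.sum_comp (yf g).symm (fun d => negMulLog (N⁻¹ * q d))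
    simp only [hper]
    have hD2 := lemD (fun _ : G => N⁻¹) q
    rw [Fintype.sum_prod_type] at hD2
    calc ∑ _g : G, ∑ d : D, negMulLog (N⁻¹ * q d)
        = (∑ d, q d) * (∑ _g : G, negMulLog N⁻¹) + (∑ _g : G, N⁻¹) * (∑ d, negMulLog (q d)) :=
          hD2
      _ = Real.log N + ∑ d, negMulLog (q d) := by
          rw [hq1, one_mul, Finset.sum_const, Finset.sum_const, Finset.card_univ,
            nsmul_eq_mul, nsmul_eq_mul, ← hNdef, hNlog, mul_inv_cancel₀ hN.ne', one_mul]
  -- error probability in (g,y) coordinates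
  set ε' : ℝ := ∑ x : G × D, if dec (yf x.1 x.2) = x.1 then 0 else N⁻¹ * q x.2 with hεdef
  have hεy : ε' = ∑ y : D, ∑ g ∈ Finset.univ.erase (dec y), r g y := by
    rw [hεdef, Fintype.sum_prod_type]
    have hg : ∀ g : G, (∑ d : D, if dec (yf g d) = g then 0 else N⁻¹ * q d)
        = ∑ y : D, (if dec y = g then 0 else r g y) := by
      intro g
      rw [← Equiv.sum_comp (yf g) (fun y => if dec y = g then 0 else r g y)]
      apply Finset.sum_congr rfl
      intro d _
      simp [hrdef]
    simp only [hg]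
    rw [Finset.sum_comm]
    apply Finset.sum_congr rfl
    intro y _
    rw [← Finset.add_sum_erase _ (fun g => if dec y = g then 0 else r g y) (Finset.mem_univ (dec y))]
    rw [if_pos rfl, zero_add]
    apply Finset.sum_congr rfl
    intro g hg2
    rw [if_neg (Finset.ne_of_mem_erase hg2).symm]
  -- per-y Fano bound, summed
  have hfano : Real.log N + ∑ d, negMulLog (q d)
      ≤ (∑ y, negMulLog (m y)) + Real.log 2 + ε' * Real.log N := by
    rw [← Hj, Finset.sum_comm]
    have hy : ∀ y : D, ∑ g, negMulLog (r g y)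
        ≤ negMulLog (m y) + m y * Real.log 2
          + (∑ g ∈ Finset.univ.erase (dec y), r g y) * Real.log N := by
      intro y
      exact lemC (fun g => r g y) (fun g => hr0 g y) (dec y)
    calc ∑ y : D, ∑ g, negMulLog (r g y)
        ≤ ∑ y : D, (negMulLog (m y) + m y * Real.log 2
            + (∑ g ∈ Finset.univ.erase (dec y), r g y) * Real.log N) :=
          Finset.sum_le_sum fun y _ => hy y
      _ = (∑ y, negMulLog (m y)) + (∑ y, m y) * Real.log 2
            + (∑ y, ∑ g ∈ Finset.univ.erase (dec y), r g y) * Real.log N := by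
          rw [Finset.sum_add_distrib, Finset.sum_add_distrib, Finset.sum_mul, Finset.sum_mul]
      _ = (∑ y, negMulLog (m y)) + Real.log 2 + ε' * Real.log N := by
          rw [hm1, one_mul, ← hεy]
  -- output entropy bound
  have hm : ∑ y, negMulLog (m y) ≤ Real.log (Fintype.card D) := by
    have := lemA Finset.univ m (fun y _ => hm0 y)
    rw [hm1, negMulLog_one, one_mul, zero_add, Finset.card_univ] at this
    exact this
  nlinarith [hfano, hm]

-- helper: sums restricted to subtype
lemma sum_restrict {α : Type*} [Fintype α] (p : α → Prop) [DecidablePred p] [Fintype {x // p x}]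
    (f : α → ℝ) (h : ∀ x, ¬ p x → f x = 0) : ∑ x : α, f x = ∑ x : {x // p x}, f ↑x := by
  classical
  rw [← Finset.sum_filter_of_ne (s := Finset.univ) (p := p)
    (fun x _ hfx => by_contra fun hp => hfx (h x hp))]
  exact Finset.sum_subtype (Finset.univ.filter p) (by simp) f

-- helper: PMF sums to 1 in reals
lemma pmf_sum_one {S : Type*} [Fintype S] (P : PMF S) : ∑ s : S, (P s).toReal = 1 := by
  have h := P.tsum_coe
  rw [tsum_fintype] at h
  rw [← ENNReal.toReal_sum (fun s _ => PMF.apply_ne_top P s), h, ENNReal.toReal_one]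

end QMacAux

/-- Q-MAC setup with any decoder `g : ((ZMod 2)²)ⁿ → C₁ × C₂`: if
`ε = P[g(Y) ≠ (X⁽¹⁾, X⁽²⁾)]`, then
`(1 - ε) · (log |C₁| + log |C₂|) ≤ n · (2 log 2 - H_P) + log 2`, the finite-blocklength form
of the sum-rate condition `R₁ + R₂ ≤ I[(X₀⁽¹⁾, X₀⁽²⁾); Y₀]`. -/
theorem stmt_12 {Ω : Type*} [MeasurableSpace Ω] (μ : Measure Ω) [IsProbabilityMeasure μ]
    (n : ℕ) (P : PMF (ZMod 2 × ZMod 2))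
    (C₁ C₂ : Submodule (ZMod 2) (Fin n → ZMod 2))
    (X1 X2 : Ω → Fin n → ZMod 2) (Δ : Ω → Fin n → ZMod 2 × ZMod 2)
    (Y : Ω → Fin n → ZMod 2 × ZMod 2)
    (hX1m : ∀ c, MeasurableSet (X1 ⁻¹' {c}))
    (hX2m : ∀ c, MeasurableSet (X2 ⁻¹' {c}))
    (hΔm : ∀ d, MeasurableSet (Δ ⁻¹' {d}))
    (hX1mem : ∀ ω, X1 ω ∈ C₁) (hX2mem : ∀ ω, X2 ω ∈ C₂)
    (hX1 : ∀ c ∈ C₁, μ (X1 ⁻¹' {c}) = (Nat.card C₁ : ENNReal)⁻¹)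
    (hX2 : ∀ c ∈ C₂, μ (X2 ⁻¹' {c}) = (Nat.card C₂ : ENNReal)⁻¹)
    (hΔ : ∀ d, μ (Δ ⁻¹' {d}) = ∏ i, P (d i))
    (hindep : ∀ c₁ c₂ d, μ {ω | X1 ω = c₁ ∧ X2 ω = c₂ ∧ Δ ω = d}
      = μ (X1 ⁻¹' {c₁}) * μ (X2 ⁻¹' {c₂}) * μ (Δ ⁻¹' {d}))
    (hY : ∀ ω i, Y ω i = (X1 ω i, X2 ω i) + Δ ω i)
    (g : (Fin n → ZMod 2 × ZMod 2) → C₁ × C₂) (ε : ℝ)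
    (hε : ε = (μ {ω | g (Y ω) ≠ (⟨X1 ω, hX1mem ω⟩, ⟨X2 ω, hX2mem ω⟩)}).toReal) :
    (1 - ε) * (Real.log (Nat.card C₁) + Real.log (Nat.card C₂))
      ≤ n * (2 * Real.log 2 - distEntropy P) + Real.log 2 := by
  classical
  letI : Fintype ↥C₁ := Fintype.ofFinite _
  letI : Fintype ↥C₂ := Fintype.ofFinite _
  haveI : Nonempty ↥C₁ := ⟨⟨0, C₁.zero_mem⟩⟩
  haveI : Nonempty ↥C₂ := ⟨⟨0, C₂.zero_mem⟩⟩
  set q : (Fin n → ZMod 2 × ZMod 2) → ℝ := fun d => ∏ i, (P (d i)).toReal with hqdef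
  have hp1 : ∑ s : ZMod 2 × ZMod 2, (P s).toReal = 1 := pmf_sum_one P
  have hq0 : ∀ d, 0 ≤ q d := fun d => Finset.prod_nonneg fun i _ => ENNReal.toReal_nonneg
  have hq1 : ∑ d, q d = 1 := lemE0 _ hp1 n
  set yf : (↥C₁ × ↥C₂) → (Fin n → ZMod 2 × ZMod 2) ≃ (Fin n → ZMod 2 × ZMod 2) :=
    fun x => Equiv.addLeft (fun i => ((x.1 : Fin n → ZMod 2) i, (x.2 : Fin n → ZMod 2) i))
    with hyfdef
  have hεsum : ε = ∑ x : (↥C₁ × ↥C₂) × (Fin n → ZMod 2 × ZMod 2),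
      if g (yf x.1 x.2) = x.1 then 0
      else ((Fintype.card (↥C₁ × ↥C₂) : ℝ))⁻¹ * q x.2 := by
    set T : Ω → (Fin n → ZMod 2) × (Fin n → ZMod 2) × (Fin n → ZMod 2 × ZMod 2) :=
      fun ω => (X1 ω, X2 ω, Δ ω) with hTdef
    set A : Set ((Fin n → ZMod 2) × (Fin n → ZMod 2) × (Fin n → ZMod 2 × ZMod 2)) :=
      {v | ¬((((g (fun i => (v.1 i, v.2.1 i) + v.2.2 i)).1 : Fin n → ZMod 2) = v.1)
          ∧ (((g (fun i => (v.1 i, v.2.1 i) + v.2.2 i)).2 : Fin n → ZMod 2) = v.2.1))} with hAdef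
    have hE : {ω | g (Y ω) ≠ (⟨X1 ω, hX1mem ω⟩, ⟨X2 ω, hX2mem ω⟩)} = T ⁻¹' A := by
      ext ω
      have hYω : Y ω = fun i => (X1 ω i, X2 ω i) + Δ ω i := funext fun i => hY ω i
      simp only [Set.mem_setOf_eq, Set.mem_preimage, hTdef, hAdef, hYω, Ne, Prod.ext_iff,
        Subtype.ext_iff]
    have hsingle : ∀ v, T ⁻¹' {v} = {ω | X1 ω = v.1 ∧ X2 ω = v.2.1 ∧ Δ ω = v.2.2} := by
      intro v; ext ω
      simp [hTdef, Prod.ext_iff, and_assoc]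
    have hTm : ∀ v, MeasurableSet (T ⁻¹' {v}) := by
      intro v
      rw [hsingle]
      have : {ω | X1 ω = v.1 ∧ X2 ω = v.2.1 ∧ Δ ω = v.2.2}
          = X1 ⁻¹' {v.1} ∩ (X2 ⁻¹' {v.2.1} ∩ Δ ⁻¹' {v.2.2}) := by
        ext ω; simp [Set.mem_preimage, and_assoc]
      rw [this]
      exact (hX1m _).inter ((hX2m _).inter (hΔm _))
    have hdecomp : μ (T ⁻¹' A) = ∑ v ∈ Finset.univ.filter (· ∈ A), μ (T ⁻¹' {v}) := by
      have hU : T ⁻¹' A = ⋃ v ∈ Finset.univ.filter (· ∈ A), T ⁻¹' {v} := by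
        ext ω
        simp only [Set.mem_preimage, Set.mem_iUnion, Finset.mem_filter, Finset.mem_univ,
          true_and, Set.mem_singleton_iff, exists_prop]
        exact ⟨fun h => ⟨T ω, h, rfl⟩, fun ⟨v, hv, he⟩ => he ▸ hv⟩
      rw [hU, measure_biUnion_finset ?_ (fun v _ => hTm v)]
      intro a _ b _ hab
      refine Set.disjoint_left.2 fun ω ha hb => hab ?_
      simp only [Set.mem_preimage, Set.mem_singleton_iff] at ha hb
      rw [← ha, ← hb]
    have hval : ∀ v, μ (T ⁻¹' {v})
        = μ (X1 ⁻¹' {v.1}) * μ (X2 ⁻¹' {v.2.1}) * μ (Δ ⁻¹' {v.2.2}) := by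
      intro v
      rw [hsingle, hindep v.1 v.2.1 v.2.2]
    have hfin : ∀ v : (Fin n → ZMod 2) × (Fin n → ZMod 2) × (Fin n → ZMod 2 × ZMod 2),
        μ (X1 ⁻¹' {v.1}) * μ (X2 ⁻¹' {v.2.1}) * μ (Δ ⁻¹' {v.2.2}) ≠ ⊤ := fun v =>
      ENNReal.mul_ne_top (ENNReal.mul_ne_top (measure_ne_top μ _) (measure_ne_top μ _))
        (measure_ne_top μ _)
    have hw1 : ∀ c, (μ (X1 ⁻¹' {c})).toReal = if c ∈ C₁ then ((Nat.card ↥C₁ : ℝ))⁻¹ else 0 := by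
      intro c; by_cases h : c ∈ C₁
      · rw [if_pos h, hX1 c h, ENNReal.toReal_inv]; simp
      · rw [if_neg h]
        have hem : X1 ⁻¹' {c} = ∅ := by
          ext ω
          simp only [Set.mem_preimage, Set.mem_singleton_iff, Set.mem_empty_iff_false, iff_false]
          intro hc; exact h (hc ▸ hX1mem ω)
        rw [hem]; simp
    have hw2 : ∀ c, (μ (X2 ⁻¹' {c})).toReal = if c ∈ C₂ then ((Nat.card ↥C₂ : ℝ))⁻¹ else 0 := by
      intro c; by_cases h : c ∈ C₂
      · rw [if_pos h, hX2 c h, ENNReal.toReal_inv]; simp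
      · rw [if_neg h]
        have hem : X2 ⁻¹' {c} = ∅ := by
          ext ω
          simp only [Set.mem_preimage, Set.mem_singleton_iff, Set.mem_empty_iff_false, iff_false]
          intro hc; exact h (hc ▸ hX2mem ω)
        rw [hem]; simp
    have hwΔ : ∀ d, (μ (Δ ⁻¹' {d})).toReal = q d := by
      intro d; rw [hΔ, ENNReal.toReal_prod]
    have hε2 : ε = ∑ v : (Fin n → ZMod 2) × (Fin n → ZMod 2) × (Fin n → ZMod 2 × ZMod 2),
        if v ∈ A then (if v.1 ∈ C₁ then ((Nat.card ↥C₁ : ℝ))⁻¹ else 0)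
          * (if v.2.1 ∈ C₂ then ((Nat.card ↥C₂ : ℝ))⁻¹ else 0) * q v.2.2 else 0 := by
      rw [hε, hE, hdecomp,
        ENNReal.toReal_sum (fun v _ => by rw [hval]; exact hfin v), ← Finset.sum_filter]
      refine Finset.sum_congr rfl fun v hv => ?_
      rw [hval, ENNReal.toReal_mul, ENNReal.toReal_mul, hw1, hw2, hwΔ]
    rw [hε2]
    -- reindex the sum over the full product onto the codeword subtypes
    rw [Fintype.sum_prod_type]
    rw [sum_restrict (· ∈ C₁) _ (fun c₁ hc₁ => by
      apply Finset.sum_eq_zero; intro z _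
      by_cases hz : (c₁, z) ∈ A <;> simp [hz, hc₁])]
    conv_rhs => rw [Fintype.sum_prod_type]
    conv_rhs => rw [Fintype.sum_prod_type]
    refine Finset.sum_congr rfl fun g1 _ => ?_
    rw [Fintype.sum_prod_type]
    rw [sum_restrict (· ∈ C₂) _ (fun c₂ hc₂ => by
      apply Finset.sum_eq_zero; intro d _
      by_cases hz : ((g1 : Fin n → ZMod 2), c₂, d) ∈ A <;> simp [hz, hc₂])]
    refine Finset.sum_congr rfl fun g2 _ => ?_
    refine Finset.sum_congr rfl fun d _ => ?_
    have hyfd : yf (g1, g2) d = fun i => ((g1 : Fin n → ZMod 2) i, (g2 : Fin n → ZMod 2) i) + d i :=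
      rfl
    have hcond : (((g1 : Fin n → ZMod 2), ((g2 : Fin n → ZMod 2), d)) ∈ A)
        ↔ ¬ (g (yf (g1, g2) d) = (g1, g2)) := by
      rw [hAdef]
      simp only [Set.mem_setOf_eq, hyfd, Prod.ext_iff, Subtype.ext_iff]
    have hcardinv : ((Fintype.card (↥C₁ × ↥C₂) : ℝ))⁻¹
        = ((Nat.card ↥C₁ : ℝ))⁻¹ * ((Nat.card ↥C₂ : ℝ))⁻¹ := by
      rw [Fintype.card_prod, Nat.card_eq_fintype_card, Nat.card_eq_fintype_card]
      push_cast
      rw [mul_inv]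
    by_cases hd : g (yf (g1, g2) d) = (g1, g2)
    · rw [if_pos hd, if_neg (by rw [hcond]; exact not_not_intro hd)]
    · rw [if_neg hd, if_pos (hcond.2 hd), if_pos (SetLike.coe_mem g1),
        if_pos (SetLike.coe_mem g2), hcardinv]
  have main := fano_pure q hq0 hq1 yf g
  rw [← hεsum] at main
  -- cardinalities
  have hc1 : Nat.card ↥C₁ = Fintype.card ↥C₁ := Nat.card_eq_fintype_card
  have hc2 : Nat.card ↥C₂ = Fintype.card ↥C₂ := Nat.card_eq_fintype_card
  have hN1 : (0:ℝ) < (Nat.card ↥C₁ : ℝ) := by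
    rw [hc1]; exact_mod_cast Fintype.card_pos
  have hN2 : (0:ℝ) < (Nat.card ↥C₂ : ℝ) := by
    rw [hc2]; exact_mod_cast Fintype.card_pos
  have hcardG : (Fintype.card (↥C₁ × ↥C₂) : ℝ) = (Nat.card ↥C₁ : ℝ) * (Nat.card ↥C₂ : ℝ) := by
    rw [Fintype.card_prod, hc1, hc2]; push_cast; ring
  have hlogG : Real.log (Fintype.card (↥C₁ × ↥C₂) : ℝ)
      = Real.log (Nat.card ↥C₁) + Real.log (Nat.card ↥C₂) := by
    rw [hcardG, Real.log_mul hN1.ne' hN2.ne']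
  have hcardD : (Fintype.card (Fin n → ZMod 2 × ZMod 2) : ℝ) = (4:ℝ) ^ n := by
    rw [Fintype.card_fun]
    push_cast
    norm_num
  have hlogD : Real.log (Fintype.card (Fin n → ZMod 2 × ZMod 2) : ℝ) = n * (2 * Real.log 2) := by
    rw [hcardD, Real.log_pow]
    have : (4:ℝ) = 2 ^ 2 := by norm_num
    rw [this, Real.log_pow]
    push_cast; ring
  have hHq : ∑ d, Real.negMulLog (q d) = n * distEntropy P := by
    rw [hqdef]
    exact lemE _ hp1 n
  rw [hlogG, hlogD, hHq] at main
  linarith
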